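/- Any two Rado decorated graphs are isomorphic as decorated graphs. -/
import Mathlib


/-!
Statement 7: Any two Rado decorated graphs (for an odd prime `ℓ`, relative to a
fixed isomorphism `log_ℓ : 1 + ℓℤ_ℓ → ℤ_ℓ`) are isomorphic as decorated graphs.

Residues mod `ℓ^n` are encoded as natural numbers `< ℓ^n`; an element of
`(ℤ/ℓ^n)^×` is a natural number `< ℓ^n` not divisible by `ℓ`.  The isomorphism
`log_ℓ` is encoded by the function `lg : ℤ_ℓ → ℤ_ℓ`, `lg x = log_ℓ (1 + ℓx)`.
-/

noncomputable section

open scoped Classical ENat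

/-- `lg` encodes a (topological) group isomorphism `log_ℓ : 1 + ℓℤ_ℓ ≃ ℤ_ℓ`
via `lg x = log_ℓ (1 + ℓ x)` (note `(1+ℓx)(1+ℓy) = 1 + ℓ(x + y + ℓxy)`). -/
structure IsLogIso (ℓ : ℕ) [Fact ℓ.Prime] (lg : ℤ_[ℓ] → ℤ_[ℓ]) : Prop where
  bijective : Function.Bijective lg
  map_mul : ∀ x y : ℤ_[ℓ], lg (x + y + (ℓ : ℤ_[ℓ]) * x * y) = lg x + lg y
  continuous : Continuous lg

/-- The value of `log_ℓ (1 + a·ℓ^n) mod ℓ^n`, as a natural number `< ℓ^n`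
(for `n ≥ 1`). -/
def logVal (ℓ : ℕ) [Fact ℓ.Prime] (lg : ℤ_[ℓ] → ℤ_[ℓ]) (n : ℕ) (a : ℤ_[ℓ]) : ℕ :=
  (PadicInt.toZModPow n (lg (a * (ℓ : ℤ_[ℓ]) ^ (n - 1)))).val

/-- The raw data of a decorated graph: a vertex set `Ω`, the function
`f : Ω → ℤ_{≥1} ∪ {∞}`, the two distinguished vertices `v1 = v_ℓ(1)`,
`v2 = v_ℓ(2)`, the decoration `g` and the labeling `lab`. -/
structure GraphData where
  Ω : Type
  f : Ω → ℕ∞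
  v1 : Ω
  v2 : Ω
  g : Ω → ℕ
  lab : Ω → Ω → ℕ

namespace GraphData

variable (D : GraphData)

/-- `f(v,w) = min (f v) (f w)`, as a natural number (it is finite on all pairs
carrying a label). -/
def fm (v w : D.Ω) : ℕ := (min (D.f v) (D.f w)).toNat

/-- The pairs `(v,w)` carrying a label: distinct, not both in the fiber over `∞`. -/
def Rel (v w : D.Ω) : Prop := v ≠ w ∧ ¬ (D.f v = ⊤ ∧ D.f w = ⊤)

/-- `D` is a decorated graph for the odd prime `ℓ` and the logarithm `lg`. -/
def IsDecorated (ℓ : ℕ) [Fact ℓ.Prime] (lg : ℤ_[ℓ] → ℤ_[ℓ]) : Prop :=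
  Countable D.Ω ∧ Infinite D.Ω ∧
  (∀ v, 1 ≤ D.f v) ∧
  D.v1 ≠ D.v2 ∧ D.f D.v1 = ⊤ ∧ D.f D.v2 = ⊤ ∧
  (∀ v, D.f v = ⊤ → v = D.v1 ∨ v = D.v2) ∧
  (∀ v, D.f v ≠ ⊤ → D.g v < ℓ ^ (D.f v).toNat ∧ ¬ ℓ ∣ D.g v) ∧
  (∀ v w, D.Rel v w → D.lab v w < ℓ ^ D.fm v w) ∧
  (∀ w, D.f w ≠ ⊤ → D.lab D.v1 w = logVal ℓ lg (D.f w).toNat (D.g w : ℤ_[ℓ])) ∧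
  (∀ w, D.f w ≠ ⊤ → D.lab w D.v1 = 0 ∧ D.lab w D.v2 = 0)

/-- `D` is Rado. -/
def IsRado (ℓ : ℕ) [Fact ℓ.Prime] (lg : ℤ_[ℓ] → ℤ_[ℓ]) : Prop :=
  ∀ S : Finset D.Ω, D.v1 ∈ S → D.v2 ∈ S →
  ∀ n : ℕ, 1 ≤ n →
  ∀ α : ℕ, α < ℓ ^ n → ¬ ℓ ∣ α →
  ∀ μ₁ μ₂ : D.Ω → ℕ,
    (∀ s ∈ S, μ₁ s < ℓ ^ (min (n : ℕ∞) (D.f s)).toNat) →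
    (∀ s ∈ S, μ₂ s < ℓ ^ (min (n : ℕ∞) (D.f s)).toNat) →
    μ₂ D.v1 = logVal ℓ lg n (α : ℤ_[ℓ]) →
    μ₁ D.v1 = 0 → μ₁ D.v2 = 0 →
    ∃ v : D.Ω, v ∉ S ∧ D.f v = (n : ℕ∞) ∧ D.g v = α ∧
      ∀ s ∈ S, D.lab v s = μ₁ s ∧ D.lab s v = μ₂ s

/-- `D` is weakly Rado. -/
def IsWeaklyRado (ℓ : ℕ) [Fact ℓ.Prime] (lg : ℤ_[ℓ] → ℤ_[ℓ]) : Prop :=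
  ∀ S : Finset D.Ω, D.v1 ∈ S → D.v2 ∈ S →
  ∀ n : ℕ, 1 ≤ n →
  ∀ α : ℕ, α < ℓ ^ n → ¬ ℓ ∣ α →
  ∀ μ₁ μ₂ : D.Ω → ℕ,
    (∀ s ∈ S, μ₁ s < ℓ ^ (min (n : ℕ∞) (D.f s)).toNat) →
    (∀ s ∈ S, μ₂ s < ℓ ^ (min (n : ℕ∞) (D.f s)).toNat) →
    μ₂ D.v1 = logVal ℓ lg n (α : ℤ_[ℓ]) →
    μ₁ D.v1 = 0 → μ₁ D.v2 = 0 →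
    ∃ v : D.Ω, v ∉ S ∧ ∃ γ : ℕ, γ < ℓ ^ n ∧ ¬ ℓ ∣ γ ∧
      D.f v = (n : ℕ∞) ∧ D.g v = α ∧
      ∀ s ∈ S, D.lab v s = (γ * μ₁ s) % ℓ ^ (min (n : ℕ∞) (D.f s)).toNat ∧
        D.lab s v = μ₂ s

/-- The scaling `γ_• · λ` of the labeling of `D`. -/
def scale (ℓ : ℕ) (γ : D.Ω → ℕ) : GraphData where
  Ω := D.Ω
  f := D.f
  v1 := D.v1
  v2 := D.v2
  g := D.g
  lab := fun v w => if D.f v = ⊤ then D.lab v w else (γ v * D.lab v w) % ℓ ^ D.fm v w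

/-- `D` is Rado up to scaling: some scaling `γ_• · λ` of its labeling by units
`γ_v ∈ (ℤ/ℓ^{f v})^×` is Rado. -/
def IsRadoUpToScaling (ℓ : ℕ) [Fact ℓ.Prime] (lg : ℤ_[ℓ] → ℤ_[ℓ]) : Prop :=
  ∃ γ : D.Ω → ℕ, (∀ v, D.f v ≠ ⊤ → γ v < ℓ ^ (D.f v).toNat ∧ ¬ ℓ ∣ γ v) ∧
    (D.scale ℓ γ).IsRado ℓ lg

end GraphData

/-- An isomorphism of decorated graphs. -/
structure GraphIso (D D' : GraphData) where
  φ : D.Ω ≃ D'.Ω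
  f_eq : ∀ v, D'.f (φ v) = D.f v
  g_eq : ∀ v, D.f v ≠ ⊤ → D'.g (φ v) = D.g v
  lab_eq : ∀ v w, D.Rel v w → D'.lab (φ v) (φ w) = D.lab v w

section BackAndForth

/-- A finite set of pairs which is a partial isomorphism of decorated graphs. -/
def PairGood (D D' : GraphData) (p : Finset (D.Ω × D'.Ω)) : Prop :=
  (D.v1, D'.v1) ∈ p ∧ (D.v2, D'.v2) ∈ p ∧
  ∀ q ∈ p, ∀ q' ∈ p,
    (q.1 = q'.1 ↔ q.2 = q'.2) ∧ D'.f q.2 = D.f q.1 ∧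
    (D.f q.1 ≠ ⊤ → D'.g q.2 = D.g q.1) ∧
    (D.Rel q.1 q'.1 → D'.lab q.2 q'.2 = D.lab q.1 q'.1)

lemma pairGood_swap (D D' : GraphData) (p : Finset (D.Ω × D'.Ω))
    (hp : PairGood D D' p) : PairGood D' D (p.image Prod.swap) := by
  obtain ⟨h1, h2, h3⟩ := hp
  refine ⟨Finset.mem_image_of_mem _ h1, Finset.mem_image_of_mem _ h2, ?_⟩
  rintro q hq q' hq'
  obtain ⟨⟨a, b⟩, hab, rfl⟩ := Finset.mem_image.mp hq
  obtain ⟨⟨a', b'⟩, hab', rfl⟩ := Finset.mem_image.mp hq'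
  obtain ⟨hiff, hf, hg, hlab⟩ := h3 _ hab _ hab'
  obtain ⟨_, hf', _, _⟩ := h3 _ hab' _ hab'
  refine ⟨hiff.symm, hf.symm, fun h => (hg (by rwa [← hf])).symm, ?_⟩
  rintro ⟨hne, hnt⟩
  refine (hlab ⟨fun h => hne (hiff.mp h), fun h => hnt ⟨hf.trans h.1, hf'.trans h.2⟩⟩).symm

lemma pairGood_init (ℓ : ℕ) [Fact ℓ.Prime] (lg : ℤ_[ℓ] → ℤ_[ℓ]) (D D' : GraphData)
    (hD : D.IsDecorated ℓ lg) (hD' : D'.IsDecorated ℓ lg) :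
    PairGood D D' {(D.v1, D'.v1), (D.v2, D'.v2)} := by
  obtain ⟨-, -, -, h4, h5, h6, -⟩ := hD
  obtain ⟨-, -, -, h4', h5', h6', -⟩ := hD'
  refine ⟨Finset.mem_insert_self _ _, Finset.mem_insert_of_mem (Finset.mem_singleton_self _), ?_⟩
  rintro q hq q' hq'
  simp only [Finset.mem_insert, Finset.mem_singleton] at hq hq'
  rcases hq with rfl | rfl <;> rcases hq' with rfl | rfl <;>
    refine ⟨?_, ?_, ?_, ?_⟩ <;>
    simp_all [GraphData.Rel] <;>
    tauto

lemma exists_extend (ℓ : ℕ) [Fact ℓ.Prime] (lg : ℤ_[ℓ] → ℤ_[ℓ]) (D D' : GraphData)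
    (hD : D.IsDecorated ℓ lg) (hD' : D'.IsDecorated ℓ lg) (hR' : D'.IsRado ℓ lg)
    (p : Finset (D.Ω × D'.Ω)) (hp : PairGood D D' p) (x : D.Ω) :
    ∃ b, PairGood D D' (insert (x, b) p) := by
  classical
  by_cases hx : ∃ b, (x, b) ∈ p
  · obtain ⟨b, hb⟩ := hx
    exact ⟨b, by rwa [Finset.insert_eq_self.mpr hb]⟩
  push_neg at hx
  obtain ⟨hc, hi, h3, h4, h5, h6, h7, h8, h9, h10, h11⟩ := hD
  obtain ⟨hp1, hp2, hp3⟩ := hp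
  have hxf : D.f x ≠ ⊤ := by
    intro hft
    rcases h7 x hft with rfl | rfl
    · exact hx _ hp1
    · exact hx _ hp2
  set n := (D.f x).toNat with hn
  have hfx : D.f x = (n : ℕ∞) := (ENat.coe_toNat hxf).symm
  have hn1 : 1 ≤ n := by
    have h := h3 x
    rw [hfx] at h
    exact_mod_cast h
  obtain ⟨hα1, hα2⟩ := h8 x hxf
  set S := p.image Prod.snd with hS
  have hv1S : D'.v1 ∈ S := Finset.mem_image_of_mem _ hp1
  have hv2S : D'.v2 ∈ S := Finset.mem_image_of_mem _ hp2
  set μ₁ : D'.Ω → ℕ := fun b => if h : ∃ a, (a, b) ∈ p then D.lab x h.choose else 0 with hμ₁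
  set μ₂ : D'.Ω → ℕ := fun b => if h : ∃ a, (a, b) ∈ p then D.lab h.choose x else 0 with hμ₂
  have key : ∀ a b, (a, b) ∈ p → μ₁ b = D.lab x a ∧ μ₂ b = D.lab a x := by
    intro a b hab
    have hex : ∃ a, (a, b) ∈ p := ⟨a, hab⟩
    have hch : hex.choose = a := by
      have h' := hex.choose_spec
      exact ((hp3 _ h' _ hab).1).mpr rfl
    constructor
    · rw [hμ₁]; simp only [dif_pos hex, hch]
    · rw [hμ₂]; simp only [dif_pos hex, hch]
  have hrelx : ∀ a b, (a, b) ∈ p → D.Rel x a :=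
    fun a b hab => ⟨fun h => hx b (h ▸ hab), fun h => hxf h.1⟩
  have hrelx' : ∀ a b, (a, b) ∈ p → D.Rel a x :=
    fun a b hab => ⟨fun h => hx b (h ▸ hab), fun h => hxf h.2⟩
  have hfmin : ∀ a b, (a, b) ∈ p → D.fm x a = (min (n : ℕ∞) (D'.f b)).toNat := by
    intro a b hab
    have h := (hp3 _ hab _ hab).2.1
    rw [GraphData.fm, hfx, h]
  obtain ⟨v, hvS, hvf, hvg, hvlab⟩ :=
    hR' S hv1S hv2S n hn1 (D.g x) hα1 hα2 μ₁ μ₂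
      (by
        intro s hs
        obtain ⟨q, hq, rfl⟩ := Finset.mem_image.mp hs
        rw [(key q.1 q.2 hq).1, ← hfmin q.1 q.2 hq]
        exact h9 _ _ (hrelx q.1 q.2 hq))
      (by
        intro s hs
        obtain ⟨q, hq, rfl⟩ := Finset.mem_image.mp hs
        rw [(key q.1 q.2 hq).2, ← hfmin q.1 q.2 hq, GraphData.fm, min_comm]
        exact h9 _ _ (hrelx' q.1 q.2 hq))
      (by rw [(key D.v1 D'.v1 hp1).2, h10 x hxf])
      (by rw [(key D.v1 D'.v1 hp1).1, (h11 x hxf).1])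
      (by rw [(key D.v2 D'.v2 hp2).1, (h11 x hxf).2])
  refine ⟨v, Finset.mem_insert_of_mem hp1, Finset.mem_insert_of_mem hp2, ?_⟩
  rintro ⟨a, b⟩ hq ⟨a', b'⟩ hq'
  have hvne : ∀ c d, (c, d) ∈ p → v ≠ d := by
    intro c d hcd h
    exact hvS (h ▸ Finset.mem_image_of_mem Prod.snd hcd)
  have hxne : ∀ c d, (c, d) ∈ p → x ≠ c := by
    intro c d hcd h
    exact hx d (h ▸ hcd)
  rw [Finset.mem_insert, Prod.mk.injEq] at hq hq'
  rcases hq with ⟨rfl, rfl⟩ | hq <;> rcases hq' with ⟨rfl, rfl⟩ | hq' <;> dsimp only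
  · exact ⟨by simp, by rw [hvf, hfx], fun _ => hvg, fun hr => absurd rfl hr.1⟩
  · refine ⟨⟨fun h => absurd h (hxne a' b' hq'), fun h => absurd h (hvne a' b' hq')⟩,
      by rw [hvf, hfx], fun _ => hvg, fun _ => ?_⟩
    rw [(hvlab b' (Finset.mem_image_of_mem _ hq')).1, (key a' b' hq').1]
  · refine ⟨⟨fun h => absurd h.symm (hxne a b hq), fun h => absurd h.symm (hvne a b hq)⟩,
      (hp3 _ hq _ hq).2.1, (hp3 _ hq _ hq).2.2.1, fun _ => ?_⟩
    rw [(hvlab b (Finset.mem_image_of_mem _ hq)).2, (key a b hq).2]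
  · exact hp3 _ hq _ hq'

lemma exists_extend' (ℓ : ℕ) [Fact ℓ.Prime] (lg : ℤ_[ℓ] → ℤ_[ℓ]) (D D' : GraphData)
    (hD : D.IsDecorated ℓ lg) (hD' : D'.IsDecorated ℓ lg) (hR : D.IsRado ℓ lg)
    (p : Finset (D.Ω × D'.Ω)) (hp : PairGood D D' p) (y : D'.Ω) :
    ∃ a, PairGood D D' (insert (a, y) p) := by
  obtain ⟨b, hb⟩ := exists_extend ℓ lg D' D hD' hD hR (p.image Prod.swap)
    (pairGood_swap D D' p hp) y
  refine ⟨b, ?_⟩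
  have h := pairGood_swap D' D _ hb
  rwa [Finset.image_insert, Finset.image_image,
    show Prod.swap ∘ (Prod.swap : D.Ω × D'.Ω → D'.Ω × D.Ω) = id from funext Prod.swap_swap,
    Finset.image_id, Prod.swap_prod_mk] at h

lemma exists_step (ℓ : ℕ) [Fact ℓ.Prime] (lg : ℤ_[ℓ] → ℤ_[ℓ]) (D D' : GraphData)
    (hD : D.IsDecorated ℓ lg) (hD' : D'.IsDecorated ℓ lg)
    (hR : D.IsRado ℓ lg) (hR' : D'.IsRado ℓ lg)
    (p : Finset (D.Ω × D'.Ω)) (hp : PairGood D D' p) (x : D.Ω) (y : D'.Ω) :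
    ∃ q, PairGood D D' q ∧ p ⊆ q ∧ (∃ b, (x, b) ∈ q) ∧ (∃ a, (a, y) ∈ q) := by
  obtain ⟨b, hb⟩ := exists_extend ℓ lg D D' hD hD' hR' p hp x
  obtain ⟨a, ha⟩ := exists_extend' ℓ lg D D' hD hD' hR (insert (x, b) p) hb y
  exact ⟨insert (a, y) (insert (x, b) p), ha,
    (Finset.subset_insert _ _).trans (Finset.subset_insert _ _),
    ⟨b, Finset.mem_insert_of_mem (Finset.mem_insert_self _ _)⟩,
    ⟨a, Finset.mem_insert_self _ _⟩⟩

noncomputable def bfSeq (ℓ : ℕ) [Fact ℓ.Prime] (lg : ℤ_[ℓ] → ℤ_[ℓ]) (D D' : GraphData)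
    (hD : D.IsDecorated ℓ lg) (hD' : D'.IsDecorated ℓ lg)
    (hR : D.IsRado ℓ lg) (hR' : D'.IsRado ℓ lg)
    (e : ℕ → D.Ω) (e' : ℕ → D'.Ω) :
    ℕ → {q : Finset (D.Ω × D'.Ω) // PairGood D D' q}
  | 0 => ⟨{(D.v1, D'.v1), (D.v2, D'.v2)}, pairGood_init ℓ lg D D' hD hD'⟩
  | k + 1 =>
    ⟨(exists_step ℓ lg D D' hD hD' hR hR' (bfSeq ℓ lg D D' hD hD' hR hR' e e' k).1
        (bfSeq ℓ lg D D' hD hD' hR hR' e e' k).2 (e k) (e' k)).choose,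
      (exists_step ℓ lg D D' hD hD' hR hR' (bfSeq ℓ lg D D' hD hD' hR hR' e e' k).1
        (bfSeq ℓ lg D D' hD hD' hR hR' e e' k).2 (e k) (e' k)).choose_spec.1⟩

lemma bfSeq_succ (ℓ : ℕ) [Fact ℓ.Prime] (lg : ℤ_[ℓ] → ℤ_[ℓ]) (D D' : GraphData)
    (hD : D.IsDecorated ℓ lg) (hD' : D'.IsDecorated ℓ lg)
    (hR : D.IsRado ℓ lg) (hR' : D'.IsRado ℓ lg)
    (e : ℕ → D.Ω) (e' : ℕ → D'.Ω) (k : ℕ) :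
    (bfSeq ℓ lg D D' hD hD' hR hR' e e' k).1 ⊆ (bfSeq ℓ lg D D' hD hD' hR hR' e e' (k+1)).1 ∧
    (∃ b, (e k, b) ∈ (bfSeq ℓ lg D D' hD hD' hR hR' e e' (k+1)).1) ∧
    (∃ a, (a, e' k) ∈ (bfSeq ℓ lg D D' hD hD' hR hR' e e' (k+1)).1) := by
  have h := (exists_step ℓ lg D D' hD hD' hR hR' (bfSeq ℓ lg D D' hD hD' hR hR' e e' k).1
      (bfSeq ℓ lg D D' hD hD' hR hR' e e' k).2 (e k) (e' k)).choose_spec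
  exact ⟨h.2.1, h.2.2.1, h.2.2.2⟩

end BackAndForth

theorem statement7 (ℓ : ℕ) [Fact ℓ.Prime] (hodd : Odd ℓ)
    (lg : ℤ_[ℓ] → ℤ_[ℓ]) (hlg : IsLogIso ℓ lg)
    (D D' : GraphData) (hD : D.IsDecorated ℓ lg) (hD' : D'.IsDecorated ℓ lg)
    (hRado : D.IsRado ℓ lg) (hRado' : D'.IsRado ℓ lg) :
    Nonempty (GraphIso D D') := by
  haveI : Countable D.Ω := hD.1
  haveI : Infinite D.Ω := hD.2.1
  haveI : Countable D'.Ω := hD'.1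
  haveI : Infinite D'.Ω := hD'.2.1
  obtain ⟨e, he⟩ := exists_surjective_nat D.Ω
  obtain ⟨e', he'⟩ := exists_surjective_nat D'.Ω
  set p := bfSeq ℓ lg D D' hD hD' hRado hRado' e e' with hpdef
  have hmono : Monotone (fun k => (p k).1) :=
    monotone_nat_of_le_succ fun k => (bfSeq_succ ℓ lg D D' hD hD' hRado hRado' e e' k).1
  set P : D.Ω → D'.Ω → Prop := fun a b => ∃ k, (a, b) ∈ (p k).1 with hPdef
  have pairs : ∀ a b a' b', P a b → P a' b' →
      (a = a' ↔ b = b') ∧ D'.f b = D.f a ∧ (D.f a ≠ ⊤ → D'.g b = D.g a) ∧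
      (D.Rel a a' → D'.lab b b' = D.lab a a') := by
    rintro a b a' b' ⟨k, hk⟩ ⟨k', hk'⟩
    exact (p (max k k')).2.2.2 (a, b) (hmono (le_max_left k k') hk) (a', b')
      (hmono (le_max_right k k') hk')
  have total : ∀ x, ∃ b, P x b := by
    intro x
    obtain ⟨k, rfl⟩ := he x
    obtain ⟨b, hb⟩ := (bfSeq_succ ℓ lg D D' hD hD' hRado hRado' e e' k).2.1
    exact ⟨b, k + 1, hb⟩
  have cototal : ∀ y, ∃ a, P a y := by
    intro y
    obtain ⟨k, rfl⟩ := he' y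
    obtain ⟨a, ha⟩ := (bfSeq_succ ℓ lg D D' hD hD' hRado hRado' e e' k).2.2
    exact ⟨a, k + 1, ha⟩
  set φ0 : D.Ω → D'.Ω := fun x => (total x).choose with hφ0def
  have hφ0 : ∀ x, P x (φ0 x) := fun x => (total x).choose_spec
  have hinj : Function.Injective φ0 := by
    intro x x' h
    exact ((pairs x (φ0 x) x' (φ0 x') (hφ0 x) (hφ0 x')).1).mpr h
  have hsurj : Function.Surjective φ0 := by
    intro y
    obtain ⟨a, ha⟩ := cototal y
    exact ⟨a, ((pairs a (φ0 a) a y (hφ0 a) ha).1).mp rfl⟩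
  refine ⟨⟨Equiv.ofBijective φ0 ⟨hinj, hsurj⟩, ?_, ?_, ?_⟩⟩
  · intro v
    exact (pairs v (φ0 v) v (φ0 v) (hφ0 v) (hφ0 v)).2.1
  · intro v hv
    exact (pairs v (φ0 v) v (φ0 v) (hφ0 v) (hφ0 v)).2.2.1 hv
  · intro v w hr
    exact (pairs v (φ0 v) w (φ0 w) (hφ0 v) (hφ0 w)).2.2.2 hr
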